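/- Let s be a positive integer and let l be a positive integer such that there exist integers k₁, k₂, k₃ ≥ 3 with k₁+k₂+k₃ = l, and suppose there exists an edge-coloring of the complete graph on s vertices with colors {1,2,3} such that for each h ∈ {1,2,3} there is no clique of k_h+1 vertices all of whose edges receive color h (i.e., s < R(k₁+1, k₂+1, k₃+1)). Then there exists an (N, s+3, 2s+1)-suitable core with N = (s+3)(s−1) + l. -/

import Mathlib

/-- An `(N, w, t)`-suitable core: an `N × w` array whose rows are permutations of `{1,…,w}`
(row `i`, position `j` holds symbol `C i j`) such that for each `s` with `0 ≤ s ≤ t−1`,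
each symbol precedes each set of `s` other symbols in at least `t − s` rows. -/
def IsSuitableCore (N w t : ℕ) (C : Fin N → Equiv.Perm (Fin w)) : Prop :=
  ∀ (σ : Fin w) (T : Finset (Fin w)), σ ∉ T → T.card < t →
    t - T.card ≤ (Finset.univ.filter fun i : Fin N =>
      ∀ τ ∈ T, (C i).symm σ < (C i).symm τ).card

def SuitableCoreExists (N w t : ℕ) : Prop :=
  ∃ C : Fin N → Equiv.Perm (Fin w), IsSuitableCore N w t C

/-! ### Auxiliary constructions -/

def mkP {n : ℕ} (x y z : Fin (n+3)) : Equiv.Perm (Fin (n+3)) :=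
  (Equiv.swap 0 x * Equiv.swap 1 ((Equiv.swap 0 x).symm y)) *
    Equiv.swap 2 (((Equiv.swap 0 x) * Equiv.swap 1 ((Equiv.swap 0 x).symm y)).symm z)

lemma mkP_spec {n : ℕ} (x y z : Fin (n+3)) (hxy : x ≠ y) (hxz : x ≠ z) (hyz : y ≠ z) :
    mkP x y z 0 = x ∧ mkP x y z 1 = y ∧ mkP x y z 2 = z := by
  have h01 : (0 : Fin (n+3)) ≠ 1 := by simp [Fin.ext_iff]
  have h02 : (0 : Fin (n+3)) ≠ 2 := by simp [Fin.ext_iff, Nat.mod_eq_of_lt (show 2 < n+3 by omega)]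
  have h12 : (1 : Fin (n+3)) ≠ 2 := by simp [Fin.ext_iff, Nat.mod_eq_of_lt (show 2 < n+3 by omega)]
  set p1 := Equiv.swap (0 : Fin (n+3)) x with hp1
  have hp10 : p1 0 = x := Equiv.swap_apply_left _ _
  set y1 := p1.symm y with hy1
  have hy1y : p1 y1 = y := Equiv.apply_symm_apply _ _
  have hy10 : y1 ≠ 0 := by
    intro h; apply hxy; rw [← hp10, ← h, hy1y]
  set p2 := p1 * Equiv.swap 1 y1 with hp2
  have hp20 : p2 0 = x := by
    rw [hp2, Equiv.Perm.mul_apply, Equiv.swap_apply_of_ne_of_ne h01 (Ne.symm hy10), hp10]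
  have hp21 : p2 1 = y := by
    rw [hp2, Equiv.Perm.mul_apply, Equiv.swap_apply_left, hy1y]
  set z2 := p2.symm z with hz2
  have hz2z : p2 z2 = z := Equiv.apply_symm_apply _ _
  have hz20 : z2 ≠ 0 := by intro h; apply hxz; rw [← hp20, ← h, hz2z]
  have hz21 : z2 ≠ 1 := by intro h; apply hyz; rw [← hp21, ← h, hz2z]
  have hdef : mkP x y z = p2 * Equiv.swap 2 z2 := rfl
  refine ⟨?_, ?_, ?_⟩
  · rw [hdef, Equiv.Perm.mul_apply, Equiv.swap_apply_of_ne_of_ne h02 (Ne.symm hz20), hp20]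
  · rw [hdef, Equiv.Perm.mul_apply, Equiv.swap_apply_of_ne_of_ne h12 (Ne.symm hz21), hp21]
  · rw [hdef, Equiv.Perm.mul_apply, Equiv.swap_apply_left, hz2z]

lemma mkP_lt_first {n : ℕ} {x y z τ : Fin (n+3)} (hxy : x ≠ y) (hxz : x ≠ z) (hyz : y ≠ z)
    (hτ : τ ≠ x) : (mkP x y z).symm x < (mkP x y z).symm τ := by
  obtain ⟨h0, h1, h2⟩ := mkP_spec x y z hxy hxz hyz
  have hsx : (mkP x y z).symm x = 0 := by rw [Equiv.symm_apply_eq, h0]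
  have hne : (mkP x y z).symm τ ≠ 0 := by
    intro h
    apply hτ
    have := congrArg (mkP x y z) h
    rwa [Equiv.apply_symm_apply, h0] at this
  rw [hsx, Fin.lt_def]
  have : ((mkP x y z).symm τ : ℕ) ≠ 0 := fun h => hne (Fin.ext (by simpa using h))
  simp only [Fin.val_zero]
  omega

lemma mkP_lt_second {n : ℕ} {x y z τ : Fin (n+3)} (hxy : x ≠ y) (hxz : x ≠ z) (hyz : y ≠ z)
    (hτx : τ ≠ x) (hτy : τ ≠ y) : (mkP x y z).symm y < (mkP x y z).symm τ := by
  obtain ⟨h0, h1, h2⟩ := mkP_spec x y z hxy hxz hyz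
  have hsy : (mkP x y z).symm y = 1 := by rw [Equiv.symm_apply_eq, h1]
  have hne0 : ((mkP x y z).symm τ : ℕ) ≠ 0 := by
    intro h
    apply hτx
    have h' : (mkP x y z).symm τ = 0 := Fin.ext (by simpa using h)
    have := congrArg (mkP x y z) h'
    rwa [Equiv.apply_symm_apply, h0] at this
  have hne1 : ((mkP x y z).symm τ : ℕ) ≠ 1 := by
    intro h
    apply hτy
    have h' : (mkP x y z).symm τ = 1 := Fin.ext (by simpa using h)
    have := congrArg (mkP x y z) h'
    rwa [Equiv.apply_symm_apply, h1] at this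
  rw [hsy, Fin.lt_def]
  simp only [Fin.val_one]
  omega

lemma mkP_lt_third {n : ℕ} {x y z τ : Fin (n+3)} (hxy : x ≠ y) (hxz : x ≠ z) (hyz : y ≠ z)
    (hτx : τ ≠ x) (hτy : τ ≠ y) (hτz : τ ≠ z) :
    (mkP x y z).symm z < (mkP x y z).symm τ := by
  obtain ⟨h0, h1, h2⟩ := mkP_spec x y z hxy hxz hyz
  have hsz : (mkP x y z).symm z = 2 := by rw [Equiv.symm_apply_eq, h2]
  have hne0 : ((mkP x y z).symm τ : ℕ) ≠ 0 := by
    intro h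
    apply hτx
    have h' : (mkP x y z).symm τ = 0 := Fin.ext (by simpa using h)
    have := congrArg (mkP x y z) h'
    rwa [Equiv.apply_symm_apply, h0] at this
  have hne1 : ((mkP x y z).symm τ : ℕ) ≠ 1 := by
    intro h
    apply hτy
    have h' : (mkP x y z).symm τ = 1 := Fin.ext (by simpa using h)
    have := congrArg (mkP x y z) h'
    rwa [Equiv.apply_symm_apply, h1] at this
  have hne2 : ((mkP x y z).symm τ : ℕ) ≠ 2 := by
    intro h
    apply hτz
    have h' : (mkP x y z).symm τ = 2 := Fin.ext (by simpa [Nat.mod_eq_of_lt (show 2 < n+3 by omega)] using h)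
    have := congrArg (mkP x y z) h'
    rwa [Equiv.apply_symm_apply, h2] at this
  rw [hsz, Fin.lt_def]
  have : ((2 : Fin (n+3)) : ℕ) = 2 := by simp
  omega

section
variable (s : ℕ) (k : Fin 3 → ℕ) (χ : Sym2 (Fin s) → Fin 3)

def ve : Fin s → Fin (s+3) := Fin.castAdd 3
def ee : Fin 3 → Fin (s+3) := Fin.natAdd s

abbrev RI : Type :=
  (Fin s × Fin (s+2)) ⊕ ((Fin 3 × Fin 2) ⊕ ((h : Fin 3) × Fin (k h - 3)))

def triple : RI s k → Fin (s+3) × Fin (s+3) × Fin (s+3)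
  | .inl (v, i) =>
    let y := ve s v
    let x := y.succAbove i
    (x, y,
      if hx : (x : ℕ) < s then
        ee s (χ s(⟨(x : ℕ), hx⟩, v) + (if x < y then 1 else 2))
      else
        ee s (⟨(x : ℕ) - s, by have := x.isLt; omega⟩ + 1))
  | .inr (.inl (h, j)) =>
      (ee s h, ee s (h + j.castSucc + 1), ee s (h + (1 - j.castSucc) + 1))
  | .inr (.inr p) => (ee s p.1, ee s (p.1 + 1), ee s (p.1 + 2))

def rowPerm : RI s k → Equiv.Perm (Fin (s+3)) := fun r =>
  mkP (triple s k χ r).1 (triple s k χ r).2.1 (triple s k χ r).2.2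

variable {s k χ}

lemma ve_val (u : Fin s) : ((ve s u : Fin (s+3)) : ℕ) = u := rfl
lemma ee_val (h : Fin 3) : ((ee s h : Fin (s+3)) : ℕ) = s + h := rfl

lemma ve_inj : Function.Injective (ve s) := fun a b h => by
  have := congrArg Fin.val h; simpa [ve_val, Fin.ext_iff] using this
lemma ee_inj : Function.Injective (ee s) := fun a b h => by
  have := congrArg Fin.val h; simp only [ee_val] at this
  exact Fin.ext (by omega)
lemma ve_ne_ee (u : Fin s) (h : Fin 3) : ve s u ≠ ee s h := by
  intro hh
  have := congrArg Fin.val hh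
  rw [ve_val, ee_val] at this
  have := u.isLt; omega

lemma triple_fst_inl (v : Fin s) (i : Fin (s+2)) :
    (triple s k χ (.inl (v, i))).1 = (ve s v).succAbove i := rfl
lemma triple_snd_inl (v : Fin s) (i : Fin (s+2)) :
    (triple s k χ (.inl (v, i))).2.1 = ve s v := rfl
lemma triple_inr_inl (h : Fin 3) (j : Fin 2) :
    triple s k χ (.inr (.inl (h, j))) =
      (ee s h, ee s (h + j.castSucc + 1), ee s (h + (1 - j.castSucc) + 1)) := rfl
lemma triple_inr_inr (p : (h : Fin 3) × Fin (k h - 3)) :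
    triple s k χ (.inr (.inr p)) = (ee s p.1, ee s (p.1 + 1), ee s (p.1 + 2)) := rfl

private lemma thd_aux (v : Fin s) (i : Fin (s+2)) :
    ∀ (x : Fin (s+3)), x = (ve s v).succAbove i →
    (triple s k χ (.inl (v, i))).2.2 =
      (if hx : (x : ℕ) < s then
        ee s (χ s(⟨(x : ℕ), hx⟩, v) + (if x < ve s v then 1 else 2))
      else
        ee s (⟨(x : ℕ) - s, by have := x.isLt; omega⟩ + 1)) := by
  rintro x rfl
  rfl

lemma triple_thd_inl_vertex (v u : Fin s) (i : Fin (s+2))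
    (h : (ve s v).succAbove i = ve s u) :
    (triple s k χ (.inl (v, i))).2.2 = ee s (χ s(u, v) + if u < v then 1 else 2) := by
  rw [thd_aux v i (ve s u) h.symm]
  have hx : ((ve s u : Fin (s+3)) : ℕ) < s := u.isLt
  rw [dif_pos hx]
  have e1 : (⟨((ve s u : Fin (s+3)) : ℕ), hx⟩ : Fin s) = u := Fin.ext rfl
  rw [e1]
  have e2 : ((ve s u : Fin (s+3)) < ve s v) ↔ (u < v) := Iff.rfl
  simp only [e2]

lemma triple_thd_inl_extra (v : Fin s) (g : Fin 3) (i : Fin (s+2))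
    (h : (ve s v).succAbove i = ee s g) :
    (triple s k χ (.inl (v, i))).2.2 = ee s (g + 1) := by
  rw [thd_aux v i (ee s g) h.symm]
  have hx : ¬ ((ee s g : Fin (s+3)) : ℕ) < s := by rw [ee_val]; omega
  rw [dif_neg hx]
  congr 2
  exact Fin.ext (by simp [ee_val])

lemma fst_cases (v : Fin s) (i : Fin (s+2)) :
    (∃ u : Fin s, (ve s v).succAbove i = ve s u) ∨
    (∃ g : Fin 3, (ve s v).succAbove i = ee s g) := by
  by_cases hx : (((ve s v).succAbove i : Fin (s+3)) : ℕ) < s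
  · exact Or.inl ⟨⟨_, hx⟩, Fin.ext rfl⟩
  · have := ((ve s v).succAbove i).isLt
    exact Or.inr ⟨⟨(((ve s v).succAbove i : Fin (s+3)) : ℕ) - s, by omega⟩,
      Fin.ext (show (((ve s v).succAbove i : Fin (s+3)) : ℕ) =
        s + ((((ve s v).succAbove i : Fin (s+3)) : ℕ) - s) by omega)⟩

lemma triple_distinct (r : RI s k) :
    (triple s k χ r).1 ≠ (triple s k χ r).2.1 ∧
    (triple s k χ r).1 ≠ (triple s k χ r).2.2 ∧
    (triple s k χ r).2.1 ≠ (triple s k χ r).2.2 := by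
  rcases r with ⟨v, i⟩ | ⟨h, j⟩ | p
  · have hxy : (ve s v).succAbove i ≠ ve s v := Fin.succAbove_ne _ _
    rw [triple_fst_inl, triple_snd_inl]
    refine ⟨hxy, ?_, ?_⟩
    · rcases fst_cases v i with ⟨u, hu⟩ | ⟨g, hg⟩
      · rw [triple_thd_inl_vertex v u i hu, hu]
        exact ve_ne_ee _ _
      · rw [triple_thd_inl_extra v g i hg, hg]
        intro hcon
        have := congrArg Fin.val (ee_inj hcon)
        rw [Fin.val_add] at this
        have := g.isLt
        simp only [Fin.val_one] at *
        omega
    · rcases fst_cases v i with ⟨u, hu⟩ | ⟨g, hg⟩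
      · rw [triple_thd_inl_vertex v u i hu]
        exact ve_ne_ee _ _
      · rw [triple_thd_inl_extra v g i hg]
        exact ve_ne_ee _ _
  · rw [triple_inr_inl]
    have key : ∀ a : Fin 3, ∀ b : Fin 2, a ≠ a + b.castSucc + 1 ∧
        a ≠ a + (1 - b.castSucc) + 1 ∧ a + b.castSucc + 1 ≠ a + (1 - b.castSucc) + 1 := by decide
    obtain ⟨k1, k2, k3⟩ := key h j
    exact ⟨fun hc => k1 (ee_inj hc), fun hc => k2 (ee_inj hc), fun hc => k3 (ee_inj hc)⟩
  · rw [triple_inr_inr]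
    have key : ∀ a : Fin 3, a ≠ a + 1 ∧ a ≠ a + 2 ∧ a + 1 ≠ a + 2 := by decide
    obtain ⟨k1, k2, k3⟩ := key p.1
    exact ⟨fun hc => k1 (ee_inj hc), fun hc => k2 (ee_inj hc), fun hc => k3 (ee_inj hc)⟩

lemma rp_first (r : RI s k) {σ τ : Fin (s+3)} (hx : (triple s k χ r).1 = σ) (hτ : τ ≠ σ) :
    (rowPerm s k χ r).symm σ < (rowPerm s k χ r).symm τ := by
  obtain ⟨d1, d2, d3⟩ := triple_distinct (χ := χ) r
  subst hx
  exact mkP_lt_first d1 d2 d3 hτ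

lemma rp_second (r : RI s k) {σ τ : Fin (s+3)} (hy : (triple s k χ r).2.1 = σ)
    (hτx : τ ≠ (triple s k χ r).1) (hτ : τ ≠ σ) :
    (rowPerm s k χ r).symm σ < (rowPerm s k χ r).symm τ := by
  obtain ⟨d1, d2, d3⟩ := triple_distinct (χ := χ) r
  subst hy
  exact mkP_lt_second d1 d2 d3 hτx hτ

lemma rp_third (r : RI s k) {σ τ : Fin (s+3)} (hz : (triple s k χ r).2.2 = σ)
    (hτx : τ ≠ (triple s k χ r).1) (hτy : τ ≠ (triple s k χ r).2.1) (hτ : τ ≠ σ) :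
    (rowPerm s k χ r).symm σ < (rowPerm s k χ r).symm τ := by
  obtain ⟨d1, d2, d3⟩ := triple_distinct (χ := χ) r
  subst hz
  exact mkP_lt_third d1 d2 d3 hτx hτy hτ

end

lemma pair_count {s : ℕ} (χ : Sym2 (Fin s) → Fin 3) (H : Fin 3) (K : ℕ)
    (hno : ∀ W : Finset (Fin s), W.card = K + 1 →
      ¬ (∀ a ∈ W, ∀ b ∈ W, a ≠ b → χ s(a, b) = H)) :
    ∀ A : Finset (Fin s),
      A.card ≤ ((A ×ˢ A).filter fun p => p.1 < p.2 ∧ χ s(p.1, p.2) ≠ H).card + K := by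
  classical
  intro A
  induction A using Finset.strongInduction with
  | _ A ih =>
    by_cases hA : A.card ≤ K
    · exact hA.trans (Nat.le_add_left _ _)
    · push_neg at hA
      obtain ⟨B, hBA, hBcard⟩ := Finset.exists_subset_card_eq (show K + 1 ≤ A.card by omega)
      have hmono := hno B hBcard
      push_neg at hmono
      obtain ⟨a, ha, b, hb, hab, hcol⟩ := hmono
      have haA := hBA ha
      have hbA := hBA hb
      have hsub : A.erase a ⊂ A := Finset.erase_ssubset haA
      have IH := ih (A.erase a) hsub
      set q : Fin s × Fin s := if a < b then (a, b) else (b, a) with hq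
      have hqmem : q ∈ (A ×ˢ A).filter fun p => p.1 < p.2 ∧ χ s(p.1, p.2) ≠ H := by
        rcases lt_or_gt_of_ne hab with h | h
        · rw [hq, if_pos h]
          simp only [Finset.mem_filter, Finset.mem_product]
          exact ⟨⟨haA, hbA⟩, h, hcol⟩
        · rw [hq, if_neg (not_lt.mpr h.le)]
          simp only [Finset.mem_filter, Finset.mem_product]
          refine ⟨⟨hbA, haA⟩, h, ?_⟩
          rwa [Sym2.eq_swap]
      have hqnot : q ∉ ((A.erase a) ×ˢ (A.erase a)).filter
          fun p => p.1 < p.2 ∧ χ s(p.1, p.2) ≠ H := by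
        simp only [Finset.mem_filter, Finset.mem_product]
        rintro ⟨⟨h1, h2⟩, -⟩
        rcases lt_or_gt_of_ne hab with h | h
        · rw [hq, if_pos h] at h1
          exact (Finset.mem_erase.mp h1).1 rfl
        · rw [hq, if_neg (not_lt.mpr h.le)] at h2
          exact (Finset.mem_erase.mp h2).1 rfl
      have hins : insert q (((A.erase a) ×ˢ (A.erase a)).filter
          fun p => p.1 < p.2 ∧ χ s(p.1, p.2) ≠ H) ⊆
          (A ×ˢ A).filter fun p => p.1 < p.2 ∧ χ s(p.1, p.2) ≠ H := by
        intro p hp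
        rcases Finset.mem_insert.mp hp with rfl | hp
        · exact hqmem
        · simp only [Finset.mem_filter, Finset.mem_product] at hp ⊢
          exact ⟨⟨Finset.mem_of_mem_erase hp.1.1, Finset.mem_of_mem_erase hp.1.2⟩, hp.2⟩
      have hcard1 : (A.erase a).card = A.card - 1 := Finset.card_erase_of_mem haA
      have hcard2 := Finset.card_insert_of_notMem hqnot
      have hcard3 := Finset.card_le_card hins
      omega

lemma core_of_family {w t N : ℕ} {ι : Type} [Fintype ι] (hcard : Fintype.card ι = N)
    (F : ι → Equiv.Perm (Fin w))
    (h : ∀ (σ : Fin w) (T : Finset (Fin w)), σ ∉ T → T.card < t →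
      t - T.card ≤ (Finset.univ.filter fun i : ι =>
        ∀ τ ∈ T, (F i).symm σ < (F i).symm τ).card) :
    SuitableCoreExists N w t := by
  classical
  let e := Fintype.equivFinOfCardEq hcard
  refine ⟨F ∘ e.symm, fun σ T hσ hT => ?_⟩
  refine (h σ T hσ hT).trans ?_
  apply Finset.card_le_card_of_injOn (fun i => e i)
  · intro a ha
    simp only [Finset.mem_coe, Finset.mem_filter, Finset.mem_univ, true_and] at ha ⊢
    intro τ hτ
    simpa using ha τ hτ
  · intro a _ b _ hab
    exact e.injective hab

lemma card_RI (s : ℕ) (k : Fin 3 → ℕ) (hs : 0 < s) (hk : ∀ h, 3 ≤ k h) {l : ℕ}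
    (hsum : k 0 + k 1 + k 2 = l) : Fintype.card (RI s k) = (s+3)*(s-1) + l := by
  have h1 : Fintype.card (RI s k) =
      s * (s+2) + (3 * 2 + ((k 0 - 3) + ((k 1 - 3) + (k 2 - 3)))) := by
    simp [Fintype.card_sum, Fintype.card_prod, Fintype.card_sigma, Fin.sum_univ_three]
    omega
  rw [h1]
  obtain ⟨s', rfl⟩ : ∃ s', s = s' + 1 := ⟨s - 1, by omega⟩
  have e0 := hk 0; have e1 := hk 1; have e2 := hk 2
  have hmul1 : (s' + 1) * (s' + 1 + 2) = s' * s' + 4 * s' + 3 := by ring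
  have hmul2 : (s' + 1 + 3) * (s' + 1 - 1) = s' * s' + 4 * s' := by
    have h : s' + 1 - 1 = s' := rfl
    rw [h]; ring
  omega


/-- If `k₁,k₂,k₃ ≥ 3`, `k₁+k₂+k₃ = l`, and there is a 3-coloring of the edges of `K_s`
with no monochromatic clique of `k_h+1` vertices in color `h` (i.e. `s < R(k₁+1,k₂+1,k₃+1)`),
then an `((s+3)(s−1)+l, s+3, 2s+1)`-suitable core exists. -/
theorem stmt11 (s l : ℕ) (hs : 0 < s) (hl : 0 < l)
    (k : Fin 3 → ℕ) (hk : ∀ h, 3 ≤ k h) (hsum : k 0 + k 1 + k 2 = l)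
    (χ : Sym2 (Fin s) → Fin 3)
    (hχ : ∀ h : Fin 3, ¬ ∃ W : Finset (Fin s), W.card = k h + 1 ∧
        ∀ a ∈ W, ∀ b ∈ W, a ≠ b → χ s(a, b) = h) :
    SuitableCoreExists ((s + 3) * (s - 1) + l) (s + 3) (2 * s + 1) := by
  classical
  apply core_of_family (card_RI s k hs hk hsum) (rowPerm s k χ)
  intro σ T hσT hTc
  set Gd : RI s k → Prop := fun i =>
    ∀ τ ∈ T, (rowPerm s k χ i).symm σ < (rowPerm s k χ i).symm τ with hGd
  show 2 * s + 1 - T.card ≤ (Finset.univ.filter Gd).card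
  have hτσ : ∀ τ ∈ T, τ ≠ σ := fun τ hτ hc => hσT (hc ▸ hτ)
  by_cases hσs : (σ : ℕ) < s
  · -- σ is a vertex symbol
    set v : Fin s := ⟨(σ : ℕ), hσs⟩ with hv
    have hveσ : ve s v = σ := Fin.ext rfl
    set S1 := Finset.univ.filter fun r : RI s k => Gd r ∧ (triple s k χ r).1 = σ with hS1
    set S2 := Finset.univ.filter fun r : RI s k => Gd r ∧ (triple s k χ r).2.1 = σ with hS2
    have hd : Disjoint S1 S2 := by
      rw [Finset.disjoint_left]
      intro r h1 h2
      rw [hS1, Finset.mem_filter] at h1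
      rw [hS2, Finset.mem_filter] at h2
      exact (triple_distinct (χ := χ) r).1 (h1.2.2.trans h2.2.2.symm)
    have hsub : S1 ∪ S2 ⊆ Finset.univ.filter Gd := by
      intro r hr
      rcases Finset.mem_union.mp hr with h | h
      · rw [hS1, Finset.mem_filter] at h
        exact Finset.mem_filter.mpr ⟨Finset.mem_univ _, h.2.1⟩
      · rw [hS2, Finset.mem_filter] at h
        exact Finset.mem_filter.mpr ⟨Finset.mem_univ _, h.2.1⟩
    have hFcard : S1.card + S2.card ≤ (Finset.univ.filter Gd).card := by
      rw [← Finset.card_union_of_disjoint hd]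
      exact Finset.card_le_card hsub
    -- count S1
    have c1 : s - 1 ≤ S1.card := by
      have hsurj : Set.SurjOn
          (fun r : RI s k => match r with | .inl (v', _) => v' | _ => v)
          ↑S1 ↑(Finset.univ.erase v) := by
        intro v' hv'
        rw [Finset.mem_coe, Finset.mem_erase] at hv'
        have hne : σ ≠ ve s v' := by
          intro hc
          exact hv'.1 (ve_inj (hveσ.trans hc)).symm
        obtain ⟨i0, hi0⟩ := Fin.exists_succAbove_eq hne
        refine ⟨Sum.inl (v', i0), ?_, rfl⟩
        rw [Finset.mem_coe, hS1, Finset.mem_filter]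
        refine ⟨Finset.mem_univ _, ?_, ?_⟩
        · intro τ hτ
          exact rp_first _ ((triple_fst_inl v' i0).trans hi0) (hτσ τ hτ)
        · exact (triple_fst_inl v' i0).trans hi0
      have := Finset.card_le_card_of_surjOn _ hsurj
      rwa [Finset.card_erase_of_mem (Finset.mem_univ v), Finset.card_univ,
        Fintype.card_fin] at this
    -- count S2
    set src2 := Finset.univ.filter fun i : Fin (s+2) => ¬ ((ve s v).succAbove i ∈ T) with hsrc2
    have c2 : src2.card ≤ S2.card := by
      apply Finset.card_le_card_of_surjOn
        (fun r : RI s k => match r with | .inl (_, i) => i | _ => (0 : Fin (s+2)))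
      intro i hi
      rw [Finset.mem_coe, hsrc2, Finset.mem_filter] at hi
      refine ⟨Sum.inl (v, i), ?_, rfl⟩
      rw [Finset.mem_coe, hS2, Finset.mem_filter]
      refine ⟨Finset.mem_univ _, ?_, (triple_snd_inl v i).trans hveσ⟩
      intro τ hτ
      apply rp_second _ ((triple_snd_inl v i).trans hveσ) _ (hτσ τ hτ)
      rw [triple_fst_inl]
      intro hc
      exact hi.2 (hc ▸ hτ)
    have csrc2 : src2.card + T.card = s + 2 := by
      have hbij : (Finset.univ.filter fun i : Fin (s+2) => (ve s v).succAbove i ∈ T).card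
          = T.card := by
        apply Finset.card_bij (fun i _ => (ve s v).succAbove i)
        · intro a ha
          exact (Finset.mem_filter.mp ha).2
        · intro a _ b _ h
          exact Fin.succAbove_right_injective h
        · intro τ hτ
          have : τ ≠ ve s v := fun hc => hσT ((hc.trans hveσ) ▸ hτ)
          obtain ⟨i, hi⟩ := Fin.exists_succAbove_eq this
          exact ⟨i, Finset.mem_filter.mpr ⟨Finset.mem_univ _, hi ▸ hτ⟩, hi⟩
      have := Finset.card_filter_add_card_filter_not
        (s := (Finset.univ : Finset (Fin (s+2)))) (p := fun i => (ve s v).succAbove i ∈ T)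
      rw [Finset.card_univ, Fintype.card_fin, hbij] at this
      rw [← hsrc2] at this
      omega
    omega
  · -- σ is an extra symbol
    have hσlt := σ.isLt
    set H : Fin 3 := ⟨(σ : ℕ) - s, by omega⟩ with hH
    have heeσ : ee s H = σ := Fin.ext (show s + ((σ : ℕ) - s) = (σ : ℕ) by omega)
    set dd : RI s k → ℕ := fun r =>
      match r with | .inl _ => 0 | .inr (.inl _) => 1 | .inr (.inr _) => 2 with hdd
    set S1a := Finset.univ.filter
      (fun r : RI s k => Gd r ∧ (triple s k χ r).1 = σ ∧ dd r = 0) with hS1a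
    set S1b := Finset.univ.filter
      (fun r : RI s k => Gd r ∧ (triple s k χ r).1 = σ ∧ dd r = 1) with hS1b
    set S1c := Finset.univ.filter
      (fun r : RI s k => Gd r ∧ (triple s k χ r).1 = σ ∧ dd r = 2) with hS1c
    set S2 := Finset.univ.filter
      (fun r : RI s k => Gd r ∧ (triple s k χ r).2.1 = σ) with hS2
    set S3 := Finset.univ.filter
      (fun r : RI s k => Gd r ∧ (triple s k χ r).2.2 = σ) with hS3
    -- disjointness
    have dab : Disjoint S1a S1b := by
      rw [Finset.disjoint_left]; intro r h1 h2
      rw [hS1a, Finset.mem_filter] at h1; rw [hS1b, Finset.mem_filter] at h2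
      omega
    have dac : Disjoint S1a S1c := by
      rw [Finset.disjoint_left]; intro r h1 h2
      rw [hS1a, Finset.mem_filter] at h1; rw [hS1c, Finset.mem_filter] at h2
      omega
    have dbc : Disjoint S1b S1c := by
      rw [Finset.disjoint_left]; intro r h1 h2
      rw [hS1b, Finset.mem_filter] at h1; rw [hS1c, Finset.mem_filter] at h2
      omega
    have da2 : Disjoint S1a S2 := by
      rw [Finset.disjoint_left]; intro r h1 h2
      rw [hS1a, Finset.mem_filter] at h1; rw [hS2, Finset.mem_filter] at h2
      exact (triple_distinct (χ := χ) r).1 (h1.2.2.1.trans h2.2.2.symm)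
    have db2 : Disjoint S1b S2 := by
      rw [Finset.disjoint_left]; intro r h1 h2
      rw [hS1b, Finset.mem_filter] at h1; rw [hS2, Finset.mem_filter] at h2
      exact (triple_distinct (χ := χ) r).1 (h1.2.2.1.trans h2.2.2.symm)
    have dc2 : Disjoint S1c S2 := by
      rw [Finset.disjoint_left]; intro r h1 h2
      rw [hS1c, Finset.mem_filter] at h1; rw [hS2, Finset.mem_filter] at h2
      exact (triple_distinct (χ := χ) r).1 (h1.2.2.1.trans h2.2.2.symm)
    have da3 : Disjoint S1a S3 := by
      rw [Finset.disjoint_left]; intro r h1 h2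
      rw [hS1a, Finset.mem_filter] at h1; rw [hS3, Finset.mem_filter] at h2
      exact (triple_distinct (χ := χ) r).2.1 (h1.2.2.1.trans h2.2.2.symm)
    have db3 : Disjoint S1b S3 := by
      rw [Finset.disjoint_left]; intro r h1 h2
      rw [hS1b, Finset.mem_filter] at h1; rw [hS3, Finset.mem_filter] at h2
      exact (triple_distinct (χ := χ) r).2.1 (h1.2.2.1.trans h2.2.2.symm)
    have dc3 : Disjoint S1c S3 := by
      rw [Finset.disjoint_left]; intro r h1 h2
      rw [hS1c, Finset.mem_filter] at h1; rw [hS3, Finset.mem_filter] at h2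
      exact (triple_distinct (χ := χ) r).2.1 (h1.2.2.1.trans h2.2.2.symm)
    have d23 : Disjoint S2 S3 := by
      rw [Finset.disjoint_left]; intro r h1 h2
      rw [hS2, Finset.mem_filter] at h1; rw [hS3, Finset.mem_filter] at h2
      exact (triple_distinct (χ := χ) r).2.2 (h1.2.2.trans h2.2.2.symm)
    have hFcard : S1a.card + S1b.card + S1c.card + S2.card + S3.card ≤
        (Finset.univ.filter Gd).card := by
      have hsub : S1a ∪ (S1b ∪ (S1c ∪ (S2 ∪ S3))) ⊆ Finset.univ.filter Gd := by
        intro r hr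
        refine Finset.mem_filter.mpr ⟨Finset.mem_univ _, ?_⟩
        simp only [Finset.mem_union] at hr
        rcases hr with h | h | h | h | h <;>
        · first
          | exact (Finset.mem_filter.mp h).2.1
      calc S1a.card + S1b.card + S1c.card + S2.card + S3.card
          = (S1a ∪ (S1b ∪ (S1c ∪ (S2 ∪ S3)))).card := by
            rw [Finset.card_union_of_disjoint, Finset.card_union_of_disjoint,
              Finset.card_union_of_disjoint, Finset.card_union_of_disjoint d23]
            · ring
            · exact Finset.disjoint_union_right.mpr ⟨dc2, dc3⟩
            · exact Finset.disjoint_union_right.mpr ⟨dbc,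
                Finset.disjoint_union_right.mpr ⟨db2, db3⟩⟩
            · exact Finset.disjoint_union_right.mpr ⟨dab,
                Finset.disjoint_union_right.mpr ⟨dac,
                  Finset.disjoint_union_right.mpr ⟨da2, da3⟩⟩⟩
        _ ≤ _ := Finset.card_le_card hsub
    -- counts
    have hc1a : s ≤ S1a.card := by
      have hsurj : Set.SurjOn
          (fun r : RI s k => match r with | .inl (v', _) => v' | _ => (⟨0, hs⟩ : Fin s))
          ↑S1a ↑(Finset.univ : Finset (Fin s)) := by
        intro v' _
        have hne : σ ≠ ve s v' := by
          intro hc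
          rw [hc, ve_val] at hσs
          exact hσs v'.isLt
        obtain ⟨i0, hi0⟩ := Fin.exists_succAbove_eq hne
        refine ⟨Sum.inl (v', i0), ?_, rfl⟩
        rw [Finset.mem_coe, hS1a, Finset.mem_filter]
        refine ⟨Finset.mem_univ _, ?_, (triple_fst_inl v' i0).trans hi0, rfl⟩
        intro τ hτ
        exact rp_first _ ((triple_fst_inl v' i0).trans hi0) (hτσ τ hτ)
      have := Finset.card_le_card_of_surjOn _ hsurj
      rwa [Finset.card_univ, Fintype.card_fin] at this
    have hc1b : 2 ≤ S1b.card := by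
      have hsurj : Set.SurjOn
          (fun r : RI s k => match r with | .inr (.inl (_, j)) => j | _ => (0 : Fin 2))
          ↑S1b ↑(Finset.univ : Finset (Fin 2)) := by
        intro j _
        refine ⟨Sum.inr (Sum.inl (H, j)), ?_, rfl⟩
        rw [Finset.mem_coe, hS1b, Finset.mem_filter]
        have hfst : (triple s k χ (Sum.inr (Sum.inl (H, j)))).1 = σ := by
          rw [triple_inr_inl]; exact heeσ
        refine ⟨Finset.mem_univ _, ?_, hfst, rfl⟩
        intro τ hτ
        exact rp_first _ hfst (hτσ τ hτ)
      have := Finset.card_le_card_of_surjOn _ hsurj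
      rwa [Finset.card_univ, Fintype.card_fin] at this
    have hc1c : k H - 3 ≤ S1c.card := by
      set src1c := (Finset.univ : Finset ((h : Fin 3) × Fin (k h - 3))).filter
        (fun p => p.1 = H) with hsrc1c
      have hcard1c : src1c.card = k H - 3 := by
        have : (Finset.univ : Finset (Fin (k H - 3))).card = src1c.card := by
          apply Finset.card_bij (fun c _ => (⟨H, c⟩ : (h : Fin 3) × Fin (k h - 3)))
          · intro a _
            rw [hsrc1c, Finset.mem_filter]
            exact ⟨Finset.mem_univ _, rfl⟩
          · intro a _ b _ h
            exact eq_of_heq (Sigma.mk.inj_iff.mp h).2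
          · intro p hp
            rw [hsrc1c, Finset.mem_filter] at hp
            obtain ⟨ph, pc⟩ := p
            obtain rfl : ph = H := hp.2
            exact ⟨pc, Finset.mem_univ _, rfl⟩
        rw [← this, Finset.card_univ, Fintype.card_fin]
      have hsurj : Set.SurjOn
          (fun r : RI s k => match r with
            | .inr (.inr p) => some p | _ => none)
          ↑S1c ↑(src1c.image some) := by
        intro b hb
        rw [Finset.mem_coe, Finset.mem_image] at hb
        obtain ⟨p, hp, rfl⟩ := hb
        rw [hsrc1c, Finset.mem_filter] at hp
        refine ⟨Sum.inr (Sum.inr p), ?_, rfl⟩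
        rw [Finset.mem_coe, hS1c, Finset.mem_filter]
        have hfst : (triple s k χ (Sum.inr (Sum.inr p))).1 = σ := by
          rw [triple_inr_inr]
          show ee s p.1 = σ
          rw [hp.2, heeσ]
        refine ⟨Finset.mem_univ _, ?_, hfst, rfl⟩
        intro τ hτ
        exact rp_first _ hfst (hτσ τ hτ)
      have := Finset.card_le_card_of_surjOn _ hsurj
      rwa [Finset.card_image_of_injective _ (Option.some_injective _), hcard1c] at this
    -- S2 : second behind other extras
    set TE := T.filter (fun τ : Fin (s+3) => ¬ ((τ : ℕ) < s)) with hTE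
    have hc2 : 2 ≤ S2.card + TE.card := by
      set B1 := (Finset.univ.erase H).filter (fun H' => ¬ (ee s H' ∈ T)) with hB1
      set B2 := (Finset.univ.erase H).filter (fun H' => ee s H' ∈ T) with hB2
      have hsplitB : B2.card + B1.card = 2 := by
        have := Finset.card_filter_add_card_filter_not
          (s := (Finset.univ.erase H)) (p := fun H' => ee s H' ∈ T)
        rw [Finset.card_erase_of_mem (Finset.mem_univ H), Finset.card_univ,
          Fintype.card_fin, ← hB1, ← hB2] at this
        omega
      have hB1c : B1.card ≤ S2.card := by
        apply Finset.card_le_card_of_surjOn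
          (fun r : RI s k => match r with | .inr (.inl (h, _)) => h | _ => H)
        intro H' hH'
        rw [Finset.mem_coe, hB1, Finset.mem_filter, Finset.mem_erase] at hH'
        obtain ⟨⟨hne, -⟩, hnt⟩ := hH'
        set j0 : Fin 2 := if H = H' + 1 then 0 else 1 with hj0
        have key3 : ∀ a b : Fin 3, b ≠ a →
            b + (if a = b + 1 then (0 : Fin 2) else 1).castSucc + 1 = a := by decide
        refine ⟨Sum.inr (Sum.inl (H', j0)), ?_, rfl⟩
        rw [Finset.mem_coe, hS2, Finset.mem_filter]
        have hsnd : (triple s k χ (Sum.inr (Sum.inl (H', j0)))).2.1 = σ := by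
          rw [triple_inr_inl]
          show ee s (H' + j0.castSucc + 1) = σ
          rw [hj0, key3 H H' hne, heeσ]
        refine ⟨Finset.mem_univ _, ?_, hsnd⟩
        intro τ hτ
        apply rp_second _ hsnd _ (hτσ τ hτ)
        show τ ≠ (triple s k χ (Sum.inr (Sum.inl (H', j0)))).1
        rw [triple_inr_inl]
        show τ ≠ ee s H'
        intro hc
        exact hnt (hc ▸ hτ)
      have hB2c : B2.card ≤ TE.card := by
        apply Finset.card_le_card_of_injOn (fun H' => ee s H')
        · intro H' hH'
          rw [Finset.mem_coe, hB2, Finset.mem_filter] at hH'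
          rw [Finset.mem_coe, hTE, Finset.mem_filter]
          refine ⟨hH'.2, ?_⟩
          show ¬ ((ee s H' : Fin (s+3)) : ℕ) < s
          rw [ee_val]
          omega
        · intro a _ b _ h
          exact ee_inj h
      omega
    -- S3 : third position rows from the coloring
    set A := Finset.univ.filter (fun u : Fin s => ¬ (ve s u ∈ T)) with hA
    set src3 := (A ×ˢ A).filter (fun p => p.1 < p.2 ∧ χ s(p.1, p.2) ≠ H) with hsrc3
    have hL1 : A.card ≤ src3.card + k H :=
      pair_count χ H (k H) (fun W hW hmono => hχ H ⟨W, hW, hmono⟩) A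
    have hsurj3 : src3.card ≤ S3.card := by
      have g3aux : ∀ (a : Fin s) (i : Fin (s+2)) (x : Fin (s+3)),
          x = (ve s a).succAbove i →
          ((fun r : RI s k => match r with
            | .inl (a, i) =>
              if hx : (((ve s a).succAbove i : Fin (s+3)) : ℕ) < s then
                (if (((ve s a).succAbove i : Fin (s+3)) : ℕ) ≤ (a : ℕ) then
                  ((⟨_, hx⟩ : Fin s), a) else (a, ⟨_, hx⟩))
              else (a, a)
            | _ => ((⟨0, hs⟩ : Fin s), (⟨0, hs⟩ : Fin s))) (Sum.inl (a, i)))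
          = (if hx : (x : ℕ) < s then
              (if (x : ℕ) ≤ (a : ℕ) then ((⟨(x : ℕ), hx⟩ : Fin s), a)
                else (a, ⟨(x : ℕ), hx⟩))
            else (a, a)) := by
        rintro a i x rfl
        rfl
      apply Finset.card_le_card_of_surjOn
        (fun r : RI s k => match r with
          | .inl (a, i) =>
            if hx : (((ve s a).succAbove i : Fin (s+3)) : ℕ) < s then
              (if (((ve s a).succAbove i : Fin (s+3)) : ℕ) ≤ (a : ℕ) then
                ((⟨_, hx⟩ : Fin s), a) else (a, ⟨_, hx⟩))
            else (a, a)
          | _ => ((⟨0, hs⟩ : Fin s), (⟨0, hs⟩ : Fin s)))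
      intro p hp
      rw [Finset.mem_coe, hsrc3, Finset.mem_filter, Finset.mem_product] at hp
      obtain ⟨⟨hp1, hp2⟩, hlt, hcol⟩ := hp
      rw [hA, Finset.mem_filter] at hp1 hp2
      have hcases : ∀ a b : Fin 3, a ≠ b → (b = a + 1 ∨ b = a + 2) := by decide
      have hvene : ve s p.1 ≠ ve s p.2 := fun h => absurd (ve_inj h) hlt.ne
      rcases hcases _ _ hcol with hcase | hcase
      · -- H = χ + 1, use row (p.2 ; p.1 first)
        obtain ⟨i0, hi0⟩ := Fin.exists_succAbove_eq hvene
        refine ⟨Sum.inl (p.2, i0), ?_, ?_⟩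
        · rw [Finset.mem_coe, hS3, Finset.mem_filter]
          have hthd : (triple s k χ (Sum.inl (p.2, i0))).2.2 = σ := by
            rw [triple_thd_inl_vertex p.2 p.1 i0 hi0, if_pos hlt, ← hcase, heeσ]
          refine ⟨Finset.mem_univ _, ?_, hthd⟩
          intro τ hτ
          apply rp_third _ hthd _ _ (hτσ τ hτ)
          · rw [triple_fst_inl, hi0]
            intro hc
            exact hp1.2 (hc ▸ hτ)
          · rw [triple_snd_inl]
            intro hc
            exact hp2.2 (hc ▸ hτ)
        · rw [g3aux p.2 i0 (ve s p.1) hi0.symm]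
          have hx : ((ve s p.1 : Fin (s+3)) : ℕ) < s := p.1.isLt
          rw [dif_pos hx]
          have hle : ((ve s p.1 : Fin (s+3)) : ℕ) ≤ (p.2 : ℕ) := le_of_lt hlt
          rw [if_pos hle]
          exact Prod.ext (Fin.ext rfl) rfl
      · -- H = χ + 2, use row (p.1 ; p.2 first)
        obtain ⟨i0, hi0⟩ := Fin.exists_succAbove_eq hvene.symm
        refine ⟨Sum.inl (p.1, i0), ?_, ?_⟩
        · rw [Finset.mem_coe, hS3, Finset.mem_filter]
          have hthd : (triple s k χ (Sum.inl (p.1, i0))).2.2 = σ := by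
            rw [triple_thd_inl_vertex p.1 p.2 i0 hi0, if_neg (not_lt.mpr hlt.le)]
            have : χ s(p.2, p.1) = χ s(p.1, p.2) := by rw [Sym2.eq_swap]
            rw [this, ← hcase, heeσ]
          refine ⟨Finset.mem_univ _, ?_, hthd⟩
          intro τ hτ
          apply rp_third _ hthd _ _ (hτσ τ hτ)
          · rw [triple_fst_inl, hi0]
            intro hc
            exact hp2.2 (hc ▸ hτ)
          · rw [triple_snd_inl]
            intro hc
            exact hp1.2 (hc ▸ hτ)
        · rw [g3aux p.1 i0 (ve s p.2) hi0.symm]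
          have hx : ((ve s p.2 : Fin (s+3)) : ℕ) < s := p.2.isLt
          rw [dif_pos hx]
          have hle : ¬ ((ve s p.2 : Fin (s+3)) : ℕ) ≤ (p.1 : ℕ) := not_le.mpr hlt
          rw [if_neg hle]
          exact Prod.ext rfl (Fin.ext rfl)
    -- vertex count of A
    set tV := (T.filter (fun τ : Fin (s+3) => (τ : ℕ) < s)).card with htV
    have hAcard : A.card + tV = s := by
      have hbij : (Finset.univ.filter fun u : Fin s => ve s u ∈ T).card = tV := by
        apply Finset.card_bij (fun u _ => ve s u)
        · intro u hu
          rw [Finset.mem_filter]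
          refine ⟨(Finset.mem_filter.mp hu).2, ?_⟩
          rw [ve_val]
          exact u.isLt
        · intro a _ b _ h
          exact ve_inj h
        · intro τ hτ
          rw [Finset.mem_filter] at hτ
          refine ⟨⟨(τ : ℕ), hτ.2⟩, Finset.mem_filter.mpr ⟨Finset.mem_univ _, ?_⟩, Fin.ext rfl⟩
          have hveτ : ve s ⟨(τ : ℕ), hτ.2⟩ = τ := Fin.ext rfl
          rw [hveτ]
          exact hτ.1
      have := Finset.card_filter_add_card_filter_not
        (s := (Finset.univ : Finset (Fin s))) (p := fun u => ve s u ∈ T)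
      rw [Finset.card_univ, Fintype.card_fin, hbij, ← hA] at this
      omega
    have hTsplit : tV + TE.card = T.card := by
      have := Finset.card_filter_add_card_filter_not
        (s := T) (p := fun τ : Fin (s+3) => (τ : ℕ) < s)
      rw [← htV, ← hTE] at this
      omega
    have hkH := hk H
    omega
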